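/- The function u(x) = (e^{ax} - 1)(e^{bx} - 1)e^{cx} is convex on [0, ∞) for all nonnegative parameters a, b, c ≥ 0. -/

import Mathlib

open Real Set

private lemma expConvex (a : ℝ) : ConvexOn ℝ (Set.Ici (0:ℝ)) (fun x => Real.exp (a * x)) := by
  refine ⟨convex_Ici 0, fun x _ y _ p q hp hq hpq => ?_⟩
  have h := convexOn_exp.2 (mem_univ (a*x)) (mem_univ (a*y)) hp hq hpq
  simp only [smul_eq_mul] at h ⊢
  calc Real.exp (a * (p*x + q*y)) = Real.exp (p*(a*x) + q*(a*y)) := by ring_nf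
    _ ≤ p * Real.exp (a*x) + q * Real.exp (a*y) := h

private lemma expSubConvex (a : ℝ) :
    ConvexOn ℝ (Set.Ici (0:ℝ)) (fun x => Real.exp (a * x) - 1) := by
  exact (expConvex a).sub (concaveOn_const (1:ℝ) (convex_Ici 0))

private lemma expMono (a : ℝ) (ha : 0 ≤ a) :
    MonotoneOn (fun x => Real.exp (a * x)) (Set.Ici (0:ℝ)) := by
  intro x _ y _ hxy
  exact Real.exp_le_exp.2 (by nlinarith)

private lemma expSubMono (a : ℝ) (ha : 0 ≤ a) :
    MonotoneOn (fun x => Real.exp (a * x) - 1) (Set.Ici (0:ℝ)) := by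
  intro x hx y hy hxy
  have := expMono a ha hx hy hxy
  simpa using this

private lemma expSubNonneg (a : ℝ) (ha : 0 ≤ a) :
    ∀ ⦃x : ℝ⦄, x ∈ Set.Ici (0:ℝ) → 0 ≤ Real.exp (a * x) - 1 := by
  intro x hx
  have : (1:ℝ) ≤ Real.exp (a * x) := Real.one_le_exp (mul_nonneg ha hx)
  linarith

theorem stmt_0 (a b c : ℝ) (ha : 0 ≤ a) (hb : 0 ≤ b) (hc : 0 ≤ c) :
    ConvexOn ℝ (Set.Ici (0 : ℝ))
      (fun x => (Real.exp (a * x) - 1) * (Real.exp (b * x) - 1) * Real.exp (c * x)) := by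
  have h1 : ConvexOn ℝ (Set.Ici (0:ℝ))
      ((fun x => Real.exp (a * x) - 1) * (fun x => Real.exp (b * x) - 1)) :=
    (expSubConvex a).mul (expSubConvex b) (expSubNonneg a ha) (expSubNonneg b hb)
      ((expSubMono a ha).monovaryOn (expSubMono b hb))
  have h1mono : MonotoneOn
      ((fun x => Real.exp (a * x) - 1) * (fun x => Real.exp (b * x) - 1)) (Set.Ici (0:ℝ)) := by
    intro x hx y hy hxy
    have := mul_le_mul (expSubMono a ha hx hy hxy) (expSubMono b hb hx hy hxy)
      (by simpa using expSubNonneg b hb hx) (by simpa using expSubNonneg a ha hy)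
    simpa [Pi.mul_apply] using this
  have h1nonneg : ∀ ⦃x : ℝ⦄, x ∈ Set.Ici (0:ℝ) →
      0 ≤ ((fun x => Real.exp (a * x) - 1) * (fun x => Real.exp (b * x) - 1)) x := by
    intro x hx
    exact mul_nonneg (expSubNonneg a ha hx) (expSubNonneg b hb hx)
  have h2 := h1.mul (expConvex c) h1nonneg
    (fun x _ => (Real.exp_pos _).le) (h1mono.monovaryOn (expMono c hc))
  exact h2
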